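/- Let m ≥ 3, let n ≥ 4 be even, and let d with 0 < d < n be coprime to n. Then the Cayley graph Cay(Z_m × Z_n, {±1} × {±d}) can be decomposed into two C_n-factors (i.e., its edge set partitions into two spanning subgraphs, each a disjoint union of cycles of length n). -/

import Mathlib

open SimpleGraph

/-- `H` is a `C_k`-factor: a 2-regular spanning graph all of whose
connected components have exactly `k` vertices (hence are `k`-cycles). -/
def IsCycleFactor {V : Type*} (H : SimpleGraph V) (k : ℕ) : Prop :=
  (∀ v, (H.neighborSet v).ncard = 2) ∧
  (∀ v, (H.connectedComponentMk v).supp.ncard = k)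

/-- `H` is a perfect matching (1-factor): every vertex has exactly one neighbour. -/
def IsOneFactor {V : Type*} (H : SimpleGraph V) : Prop :=
  ∀ v, (H.neighborSet v).ncard = 1

/-- A partition of the edge set of `G` into cycle factors with prescribed cycle lengths. -/
def CycleDecomp {V : Type*} {k : ℕ} (G : SimpleGraph V) (ℓ : Fin k → ℕ) : Prop :=
  ∃ f : Fin k → SimpleGraph V,
    (∀ i, f i ≤ G ∧ IsCycleFactor (f i) (ℓ i)) ∧
    ∀ e ∈ G.edgeSet, ∃! i, e ∈ (f i).edgeSet

/-- A partition of the edge set of `G` into cycle factors with prescribed cycle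
lengths together with one perfect matching. -/
def CycleDecompPM {V : Type*} {k : ℕ} (G : SimpleGraph V) (ℓ : Fin k → ℕ) : Prop :=
  ∃ (f : Fin k → SimpleGraph V) (M : SimpleGraph V),
    (∀ i, f i ≤ G ∧ IsCycleFactor (f i) (ℓ i)) ∧ M ≤ G ∧ IsOneFactor M ∧
    ∀ e ∈ G.edgeSet,
      ((∃! i, e ∈ (f i).edgeSet) ∧ e ∉ M.edgeSet) ∨
      ((∀ i, e ∉ (f i).edgeSet) ∧ e ∈ M.edgeSet)

/-- The Cayley graph on `ZMod m × ZMod n` with connection set `S`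
(symmetrised, loops removed). -/
def cay (m n : ℕ) (S : Set (ZMod m × ZMod n)) : SimpleGraph (ZMod m × ZMod n) :=
  SimpleGraph.fromRel (fun x y => x - y ∈ S)

namespace CayAux

section Generic
variable {V W : Type*} (H : SimpleGraph W) (e : V ≃ W)

lemma comap_nbr (x : V) : (H.comap ⇑e).neighborSet x = ⇑e ⁻¹' H.neighborSet (e x) := rfl

lemma comap_reach (x y : V) : (H.comap ⇑e).Reachable x y ↔ H.Reachable (e x) (e y) := by
  constructor
  · intro h
    exact h.map (⟨⇑e, fun h => h⟩ : H.comap ⇑e →g H)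
  · intro h
    have h2 := h.map (⟨⇑e.symm, fun {a b} hab => by
      simp only [comap_adj, Equiv.apply_symm_apply]; exact hab⟩ : H →g H.comap ⇑e)
    change (H.comap ⇑e).Reachable (e.symm (e x)) (e.symm (e y)) at h2
    rwa [e.symm_apply_apply, e.symm_apply_apply] at h2

lemma comap_supp (x : V) :
    ((H.comap ⇑e).connectedComponentMk x).supp
      = ⇑e ⁻¹' (H.connectedComponentMk (e x)).supp := by
  ext y
  simp only [ConnectedComponent.mem_supp_iff, Set.mem_preimage, ConnectedComponent.eq]
  exact comap_reach H e y x

lemma ncard_preimage (s : Set W) : (⇑e ⁻¹' s).ncard = s.ncard := by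
  have h : ⇑e ⁻¹' s = ⇑e.symm '' s := by
    rw [Equiv.image_eq_preimage_symm]; simp
  rw [h]
  exact Set.ncard_image_of_injective s e.symm.injective

end Generic

/-- The auxiliary graph: disjoint union of `n`-cycles, one per row. -/
def Cg (m n : ℕ) : SimpleGraph (ZMod m × ZMod n) :=
  cay m n {((0 : ZMod m), (1 : ZMod n)), (0, -1)}

lemma Cg_adj (m n : ℕ) (h1 : (1 : ZMod n) ≠ 0) (u w : ZMod m × ZMod n) :
    (Cg m n).Adj u w ↔
      (w = u + ((0 : ZMod m), (1 : ZMod n)) ∨ w = u - ((0 : ZMod m), (1 : ZMod n))) := by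
  simp only [Cg, cay, fromRel_adj, Set.mem_insert_iff, Set.mem_singleton_iff, Prod.ext_iff,
    Prod.fst_sub, Prod.snd_sub, Prod.fst_add, Prod.snd_add, ne_eq]
  constructor
  · rintro ⟨-, (⟨ha, hb⟩ | ⟨ha, hb⟩) | ⟨ha, hb⟩ | ⟨ha, hb⟩⟩
    · exact Or.inr ⟨by linear_combination -ha, by linear_combination -hb⟩
    · exact Or.inl ⟨by linear_combination -ha, by linear_combination -hb⟩
    · exact Or.inl ⟨by linear_combination ha, by linear_combination hb⟩
    · exact Or.inr ⟨by linear_combination ha, by linear_combination hb⟩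
  · rintro (⟨ha, hb⟩ | ⟨ha, hb⟩)
    · exact ⟨fun ⟨_, h2b⟩ => h1 (by linear_combination -hb - h2b),
        Or.inr (Or.inl ⟨by linear_combination ha, by linear_combination hb⟩)⟩
    · exact ⟨fun ⟨_, h2b⟩ => h1 (by linear_combination hb + h2b),
        Or.inl (Or.inl ⟨by linear_combination -ha, by linear_combination -hb⟩)⟩

lemma Cg_nbr (m n : ℕ) (h1 : (1 : ZMod n) ≠ 0) (u : ZMod m × ZMod n) :
    (Cg m n).neighborSet u =
      {u + ((0 : ZMod m), (1 : ZMod n)), u - ((0 : ZMod m), (1 : ZMod n))} := by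
  ext w
  simp only [mem_neighborSet, Set.mem_insert_iff, Set.mem_singleton_iff, Cg_adj m n h1]

lemma Cg_nbr_ncard (m n : ℕ) (h1 : (1 : ZMod n) ≠ 0) (h2 : (2 : ZMod n) ≠ 0)
    (u : ZMod m × ZMod n) : ((Cg m n).neighborSet u).ncard = 2 := by
  rw [Cg_nbr m n h1]
  refine Set.ncard_pair ?_
  intro h
  have hb := congrArg Prod.snd h
  simp only [Prod.snd_add, Prod.snd_sub] at hb
  exact h2 (by linear_combination hb)

lemma Cg_reach_fst (m n : ℕ) (h1 : (1 : ZMod n) ≠ 0) {u v : ZMod m × ZMod n}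
    (h : (Cg m n).Reachable u v) : u.1 = v.1 := by
  obtain ⟨p⟩ := h
  induction p with
  | nil => rfl
  | cons hadj p ih =>
    rw [Cg_adj m n h1] at hadj
    rcases hadj with h | h <;>
      { rw [← ih, h]; simp }

lemma Cg_reach_row (m n : ℕ) [NeZero n] (h1 : (1 : ZMod n) ≠ 0) (a : ZMod m) (b c : ZMod n) :
    (Cg m n).Reachable (a, b) (a, c) := by
  have key : ∀ k : ℕ, (Cg m n).Reachable (a, b) (a, b + (k : ZMod n)) := by
    intro k
    induction k with
    | zero => simpa using Reachable.refl _
    | succ k ih =>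
      refine ih.trans (Adj.reachable ?_)
      rw [Cg_adj m n h1]
      left
      refine Prod.ext (by simp) ?_
      push_cast
      simp [add_assoc]
  have := key ((c - b).val)
  rwa [ZMod.natCast_val, ZMod.cast_id, add_sub_cancel] at this

lemma Cg_supp (m n : ℕ) [NeZero n] (h1 : (1 : ZMod n) ≠ 0) (v : ZMod m × ZMod n) :
    ((Cg m n).connectedComponentMk v).supp = {w : ZMod m × ZMod n | w.1 = v.1} := by
  ext w
  simp only [ConnectedComponent.mem_supp_iff, ConnectedComponent.eq, Set.mem_setOf_eq]
  constructor
  · exact fun h => Cg_reach_fst m n h1 h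
  · intro h
    have := Cg_reach_row m n h1 v.1 w.2 v.2
    rwa [show (v.1, w.2) = w from Prod.ext h.symm rfl, Prod.mk.eta] at this

lemma ncard_row (m n : ℕ) [NeZero n] (c : ZMod m) :
    {w : ZMod m × ZMod n | w.1 = c}.ncard = n := by
  have h : {w : ZMod m × ZMod n | w.1 = c} = (fun b : ZMod n => (c, b)) '' Set.univ := by
    ext w
    simp only [Set.mem_setOf_eq, Set.image_univ, Set.mem_range]
    exact ⟨fun hw => ⟨w.2, Prod.ext hw.symm rfl⟩, fun ⟨b, hb⟩ => by rw [← hb]⟩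
  rw [h, Set.ncard_image_of_injective _ (fun b b' hbb => congrArg Prod.snd hbb),
    Set.ncard_univ, Nat.card_eq_fintype_card, ZMod.card]

end CayAux

namespace CayAux

/-- Parity homomorphism. -/
def P (n : ℕ) (hn2 : 2 ∣ n) : ZMod n →+* ZMod 2 := ZMod.castHom hn2 (ZMod 2)

/-- Parity of an element of `ZMod n`, lifted to `ZMod m`. -/
def par (m n : ℕ) (hn2 : 2 ∣ n) (b : ZMod n) : ZMod m := (((P n hn2 b).val : ℕ) : ZMod m)

lemma par_zero (m n : ℕ) (hn2 : 2 ∣ n) (b : ZMod n) (h : P n hn2 b = 0) :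
    par m n hn2 b = 0 := by simp [par, h]

lemma par_one (m n : ℕ) (hn2 : 2 ∣ n) (b : ZMod n) (h : P n hn2 b = 1) :
    par m n hn2 b = 1 := by
  unfold par
  rw [h]
  norm_num [ZMod.val_one]

/-- The vertex relabelling carrying the standard cycles to the first factor. -/
def Phi (m n d : ℕ) (hn2 : 2 ∣ n) (hcop : Nat.Coprime d n) :
    (ZMod m × ZMod n) ≃ (ZMod m × ZMod n) where
  toFun p := (p.1 + par m n hn2 p.2, p.2 * d)
  invFun q := (q.1 - par m n hn2 (q.2 * (d : ZMod n)⁻¹), q.2 * (d : ZMod n)⁻¹)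
  left_inv p := by
    have h : p.2 * (d : ZMod n) * (d : ZMod n)⁻¹ = p.2 := by
      rw [mul_assoc, ZMod.coe_mul_inv_eq_one d hcop, mul_one]
    simp [h]
  right_inv q := by
    have h : q.2 * (d : ZMod n)⁻¹ * (d : ZMod n) = q.2 := by
      rw [mul_assoc, mul_comm ((d : ZMod n)⁻¹), ZMod.coe_mul_inv_eq_one d hcop, mul_one]
    simp [h]

/-- First `C_n`-factor. -/
def F1 (m n d : ℕ) (hn2 : 2 ∣ n) (hcop : Nat.Coprime d n) : SimpleGraph (ZMod m × ZMod n) :=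
  (Cg m n).comap ⇑(Phi m n d hn2 hcop).symm

/-- Second `C_n`-factor: translate of the first by `(0,1)`. -/
def tEquiv (m n : ℕ) : (ZMod m × ZMod n) ≃ (ZMod m × ZMod n) :=
  Equiv.subRight ((0 : ZMod m), (1 : ZMod n))

def F2 (m n d : ℕ) (hn2 : 2 ∣ n) (hcop : Nat.Coprime d n) : SimpleGraph (ZMod m × ZMod n) :=
  (Cg m n).comap ⇑((tEquiv m n).trans (Phi m n d hn2 hcop).symm)

lemma F2_adj_F1 (m n d : ℕ) (hn2 : 2 ∣ n) (hcop : Nat.Coprime d n)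
    (x y : ZMod m × ZMod n) :
    (F2 m n d hn2 hcop).Adj x y ↔
      (F1 m n d hn2 hcop).Adj (x - ((0 : ZMod m), (1 : ZMod n)))
        (y - ((0 : ZMod m), (1 : ZMod n))) := Iff.rfl

end CayAux

namespace CayAux

lemma P_d (n d : ℕ) (hn2 : 2 ∣ n) (hd : d % 2 = 1) : P n hn2 (d : ZMod n) = 1 := by
  have h : P n hn2 ((d : ℕ) : ZMod n) = ((d : ℕ) : ZMod 2) := map_natCast _ d
  rw [h, ← ZMod.natCast_mod, hd, Nat.cast_one]

lemma P_dinv (n d : ℕ) (hn2 : 2 ∣ n) (hcop : Nat.Coprime d n) (hd : d % 2 = 1) :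
    P n hn2 ((d : ZMod n)⁻¹) = 1 := by
  have h := congrArg (P n hn2) (ZMod.coe_mul_inv_eq_one d hcop)
  rwa [map_mul, map_one, P_d n d hn2 hd, one_mul] at h

lemma zmod2_cases (a : ZMod 2) : a = 0 ∨ a = 1 := by revert a; decide

section Adj

variable (m n d : ℕ) (hn2 : 2 ∣ n) (hcop : Nat.Coprime d n) (hd : d % 2 = 1)
include hd

lemma helperA (x y : ZMod m × ZMod n)
    (h : (Phi m n d hn2 hcop).symm y
        = (Phi m n d hn2 hcop).symm x + ((0 : ZMod m), (1 : ZMod n))) :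
    (P n hn2 x.2 = 0 ∧ y.1 = x.1 + 1 ∧ y.2 = x.2 + d) ∨
    (P n hn2 x.2 = 1 ∧ y.1 = x.1 - 1 ∧ y.2 = x.2 + d) := by
  rcases hxy : (Phi m n d hn2 hcop).symm x with ⟨a, j⟩
  have hx : x = Phi m n d hn2 hcop (a, j) := by rw [← hxy, Equiv.apply_symm_apply]
  have hy : y = Phi m n d hn2 hcop (a, j + 1) := by
    rw [← (Phi m n d hn2 hcop).apply_symm_apply y, h, hxy]
    congr 1
    exact Prod.ext (by simp) rfl
  have hx1 : x.1 = a + par m n hn2 j := by rw [hx]; rfl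
  have hx2 : x.2 = j * d := by rw [hx]; rfl
  have hy1 : y.1 = a + par m n hn2 (j + 1) := by rw [hy]; rfl
  have hy2 : y.2 = (j + 1) * d := by rw [hy]; rfl
  have hpx : P n hn2 x.2 = P n hn2 j := by
    rw [hx2, map_mul, P_d n d hn2 hd, mul_one]
  have hj1 : P n hn2 (j + 1) = P n hn2 j + 1 := by rw [map_add, map_one]
  rcases zmod2_cases (P n hn2 j) with h0 | h0
  · left
    refine ⟨by rw [hpx, h0], ?_, ?_⟩
    · rw [hy1, hx1, par_zero m n hn2 j h0,
        par_one m n hn2 _ (by rw [hj1, h0, zero_add])]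
      ring
    · rw [hy2, hx2]; ring
  · right
    refine ⟨by rw [hpx, h0], ?_, ?_⟩
    · rw [hy1, hx1, par_one m n hn2 j h0,
        par_zero m n hn2 _ (by rw [hj1, h0]; decide)]
      ring
    · rw [hy2, hx2]; ring

lemma helperB0 (x y : ZMod m × ZMod n) (hp : P n hn2 x.2 = 0)
    (h1 : y.1 = x.1 + 1) (h2 : y.2 = x.2 + d) :
    (Phi m n d hn2 hcop).symm y
      = (Phi m n d hn2 hcop).symm x + ((0 : ZMod m), (1 : ZMod n)) := by
  have hpy : P n hn2 y.2 = 1 := by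
    rw [h2, map_add, hp, P_d n d hn2 hd, zero_add]
  have hyd : y.2 * (d : ZMod n)⁻¹ = x.2 * (d : ZMod n)⁻¹ + 1 := by
    rw [h2, add_mul, ZMod.coe_mul_inv_eq_one d hcop]
  refine Prod.ext ?_ ?_
  · show y.1 - par m n hn2 (y.2 * (d : ZMod n)⁻¹)
      = (x.1 - par m n hn2 (x.2 * (d : ZMod n)⁻¹)) + 0
    rw [par_one m n hn2 _ (by rw [map_mul, P_dinv n d hn2 hcop hd, mul_one, hpy]),
      par_zero m n hn2 _ (by rw [map_mul, P_dinv n d hn2 hcop hd, mul_one, hp]), h1]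
    ring
  · show y.2 * (d : ZMod n)⁻¹ = x.2 * (d : ZMod n)⁻¹ + 1
    exact hyd

lemma helperB1 (x y : ZMod m × ZMod n) (hp : P n hn2 x.2 = 1)
    (h1 : y.1 = x.1 - 1) (h2 : y.2 = x.2 + d) :
    (Phi m n d hn2 hcop).symm y
      = (Phi m n d hn2 hcop).symm x + ((0 : ZMod m), (1 : ZMod n)) := by
  have hpy : P n hn2 y.2 = 0 := by
    rw [h2, map_add, hp, P_d n d hn2 hd]; decide
  have hyd : y.2 * (d : ZMod n)⁻¹ = x.2 * (d : ZMod n)⁻¹ + 1 := by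
    rw [h2, add_mul, ZMod.coe_mul_inv_eq_one d hcop]
  refine Prod.ext ?_ ?_
  · show y.1 - par m n hn2 (y.2 * (d : ZMod n)⁻¹)
      = (x.1 - par m n hn2 (x.2 * (d : ZMod n)⁻¹)) + 0
    rw [par_zero m n hn2 _ (by rw [map_mul, P_dinv n d hn2 hcop hd, mul_one, hpy]),
      par_one m n hn2 _ (by rw [map_mul, P_dinv n d hn2 hcop hd, mul_one, hp]), h1]
    ring
  · show y.2 * (d : ZMod n)⁻¹ = x.2 * (d : ZMod n)⁻¹ + 1
    exact hyd

lemma F1_adj_iff (h1n : (1 : ZMod n) ≠ 0) (x y : ZMod m × ZMod n) :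
    (F1 m n d hn2 hcop).Adj x y ↔
      (P n hn2 x.2 = 0 ∧ y.1 = x.1 + 1 ∧ y.2 = x.2 + d) ∨
      (P n hn2 y.2 = 0 ∧ x.1 = y.1 + 1 ∧ x.2 = y.2 + d) ∨
      (P n hn2 x.2 = 1 ∧ y.1 = x.1 - 1 ∧ y.2 = x.2 + d) ∨
      (P n hn2 y.2 = 1 ∧ x.1 = y.1 - 1 ∧ x.2 = y.2 + d) := by
  have base : (F1 m n d hn2 hcop).Adj x y ↔
      ((Phi m n d hn2 hcop).symm y
          = (Phi m n d hn2 hcop).symm x + ((0 : ZMod m), (1 : ZMod n)) ∨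
        (Phi m n d hn2 hcop).symm y
          = (Phi m n d hn2 hcop).symm x - ((0 : ZMod m), (1 : ZMod n))) := by
    rw [F1, comap_adj, Cg_adj m n h1n]
  rw [base]
  constructor
  · rintro (h | h)
    · rcases helperA m n d hn2 hcop hd x y h with ⟨hp, ha, hb⟩ | ⟨hp, ha, hb⟩
      · exact Or.inl ⟨hp, ha, hb⟩
      · exact Or.inr (Or.inr (Or.inl ⟨hp, ha, hb⟩))
    · have h' : (Phi m n d hn2 hcop).symm x
          = (Phi m n d hn2 hcop).symm y + ((0 : ZMod m), (1 : ZMod n)) := by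
        rw [h]; abel
      rcases helperA m n d hn2 hcop hd y x h' with ⟨hp, ha, hb⟩ | ⟨hp, ha, hb⟩
      · exact Or.inr (Or.inl ⟨hp, ha, hb⟩)
      · exact Or.inr (Or.inr (Or.inr ⟨hp, ha, hb⟩))
  · rintro (⟨hp, ha, hb⟩ | ⟨hp, ha, hb⟩ | ⟨hp, ha, hb⟩ | ⟨hp, ha, hb⟩)
    · exact Or.inl (helperB0 m n d hn2 hcop hd x y hp ha hb)
    · have h := helperB0 m n d hn2 hcop hd y x hp ha hb
      exact Or.inr (by rw [h]; abel)
    · exact Or.inl (helperB1 m n d hn2 hcop hd x y hp ha hb)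
    · have h := helperB1 m n d hn2 hcop hd y x hp ha hb
      exact Or.inr (by rw [h]; abel)

lemma F2_adj_iff (h1n : (1 : ZMod n) ≠ 0) (x y : ZMod m × ZMod n) :
    (F2 m n d hn2 hcop).Adj x y ↔
      (P n hn2 x.2 = 1 ∧ y.1 = x.1 + 1 ∧ y.2 = x.2 + d) ∨
      (P n hn2 y.2 = 1 ∧ x.1 = y.1 + 1 ∧ x.2 = y.2 + d) ∨
      (P n hn2 x.2 = 0 ∧ y.1 = x.1 - 1 ∧ y.2 = x.2 + d) ∨
      (P n hn2 y.2 = 0 ∧ x.1 = y.1 - 1 ∧ x.2 = y.2 + d) := by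
  have z0 : ∀ a : ZMod 2, a - 1 = 0 ↔ a = 1 := by decide
  have z1 : ∀ a : ZMod 2, a - 1 = 1 ↔ a = 0 := by decide
  have c1 : ∀ u v w : ZMod n, (u - 1 = v - 1 + w) ↔ (u = v + w) :=
    fun u v w => ⟨fun h => by linear_combination h, fun h => by linear_combination h⟩
  rw [F2_adj_F1, F1_adj_iff m n d hn2 hcop hd h1n]
  simp only [Prod.fst_sub, Prod.snd_sub, map_sub, map_one, sub_zero, z0, z1, c1]

end Adj

end CayAux

namespace CayAux

def Gs (m n d : ℕ) : SimpleGraph (ZMod m × ZMod n) :=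
  cay m n ({((1 : ZMod m), (d : ZMod n)), (1, -(d : ZMod n)),
    (-1, (d : ZMod n)), (-1, -(d : ZMod n))} : Set (ZMod m × ZMod n))

lemma adj_of_shapes (m n d : ℕ) (h1m : (1 : ZMod m) ≠ 0) (x y : ZMod m × ZMod n)
    (h : (y.1 = x.1 + 1 ∧ y.2 = x.2 + d) ∨ (x.1 = y.1 + 1 ∧ x.2 = y.2 + d) ∨
         (y.1 = x.1 - 1 ∧ y.2 = x.2 + d) ∨ (x.1 = y.1 - 1 ∧ x.2 = y.2 + d)) :
    (Gs m n d).Adj x y := by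
  rw [Gs, cay, fromRel_adj]
  constructor
  · rintro rfl
    rcases h with ⟨ha, _⟩ | ⟨ha, _⟩ | ⟨ha, _⟩ | ⟨ha, _⟩ <;>
      first
        | exact h1m (by linear_combination ha)
        | exact h1m (by linear_combination -ha)
  · simp only [Set.mem_insert_iff, Set.mem_singleton_iff, Prod.ext_iff,
      Prod.fst_sub, Prod.snd_sub]
    rcases h with ⟨ha, hb⟩ | ⟨ha, hb⟩ | ⟨ha, hb⟩ | ⟨ha, hb⟩
    · exact Or.inr (Or.inl ⟨by linear_combination ha, by linear_combination hb⟩)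
    · exact Or.inl (Or.inl ⟨by linear_combination ha, by linear_combination hb⟩)
    · exact Or.inr (Or.inr (Or.inr (Or.inl ⟨by linear_combination ha,
        by linear_combination hb⟩)))
    · exact Or.inl (Or.inr (Or.inr (Or.inl ⟨by linear_combination ha,
        by linear_combination hb⟩)))

lemma F1_le (m n d : ℕ) (hn2 : 2 ∣ n) (hcop : Nat.Coprime d n) (hd : d % 2 = 1)
    (h1n : (1 : ZMod n) ≠ 0) (h1m : (1 : ZMod m) ≠ 0) :
    F1 m n d hn2 hcop ≤ Gs m n d := by
  intro x y h
  rw [F1_adj_iff m n d hn2 hcop hd h1n] at h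
  apply adj_of_shapes m n d h1m
  rcases h with ⟨_, ha, hb⟩ | ⟨_, ha, hb⟩ | ⟨_, ha, hb⟩ | ⟨_, ha, hb⟩
  · exact Or.inl ⟨ha, hb⟩
  · exact Or.inr (Or.inl ⟨ha, hb⟩)
  · exact Or.inr (Or.inr (Or.inl ⟨ha, hb⟩))
  · exact Or.inr (Or.inr (Or.inr ⟨ha, hb⟩))

lemma F2_le (m n d : ℕ) (hn2 : 2 ∣ n) (hcop : Nat.Coprime d n) (hd : d % 2 = 1)
    (h1n : (1 : ZMod n) ≠ 0) (h1m : (1 : ZMod m) ≠ 0) :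
    F2 m n d hn2 hcop ≤ Gs m n d := by
  intro x y h
  rw [F2_adj_iff m n d hn2 hcop hd h1n] at h
  apply adj_of_shapes m n d h1m
  rcases h with ⟨_, ha, hb⟩ | ⟨_, ha, hb⟩ | ⟨_, ha, hb⟩ | ⟨_, ha, hb⟩
  · exact Or.inl ⟨ha, hb⟩
  · exact Or.inr (Or.inl ⟨ha, hb⟩)
  · exact Or.inr (Or.inr (Or.inl ⟨ha, hb⟩))
  · exact Or.inr (Or.inr (Or.inr ⟨ha, hb⟩))

lemma adj_exists_aux (m n d : ℕ) (hn2 : 2 ∣ n) (hcop : Nat.Coprime d n) (hd : d % 2 = 1)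
    (h1n : (1 : ZMod n) ≠ 0) (x y : ZMod m × ZMod n)
    (h : (y.1 - x.1 = 1 ∧ y.2 - x.2 = d) ∨ (y.1 - x.1 = 1 ∧ y.2 - x.2 = -d) ∨
         (y.1 - x.1 = -1 ∧ y.2 - x.2 = d) ∨ (y.1 - x.1 = -1 ∧ y.2 - x.2 = -d)) :
    (F1 m n d hn2 hcop).Adj x y ∨ (F2 m n d hn2 hcop).Adj x y := by
  rw [F1_adj_iff m n d hn2 hcop hd h1n, F2_adj_iff m n d hn2 hcop hd h1n]
  rcases h with ⟨ha, hb⟩ | ⟨ha, hb⟩ | ⟨ha, hb⟩ | ⟨ha, hb⟩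
  · -- y = x + (1, d) : shape A
    rcases zmod2_cases (P n hn2 x.2) with hp | hp
    · exact Or.inl (Or.inl ⟨hp, by linear_combination ha, by linear_combination hb⟩)
    · exact Or.inr (Or.inl ⟨hp, by linear_combination ha, by linear_combination hb⟩)
  · -- y = x + (1, -d) : shape D
    have hpy : P n hn2 y.2 = P n hn2 x.2 - 1 := by
      have hc := congrArg (P n hn2) (show y.2 = x.2 - d by linear_combination hb)
      rwa [map_sub, P_d n d hn2 hd] at hc
    rcases zmod2_cases (P n hn2 x.2) with hp | hp
    · refine Or.inl (Or.inr (Or.inr (Or.inr ⟨?_, by linear_combination -ha,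
        by linear_combination -hb⟩)))
      rw [hpy, hp]; decide
    · refine Or.inr (Or.inr (Or.inr (Or.inr ⟨?_, by linear_combination -ha,
        by linear_combination -hb⟩)))
      rw [hpy, hp]; decide
  · -- y = x + (-1, d) : shape C
    rcases zmod2_cases (P n hn2 x.2) with hp | hp
    · exact Or.inr (Or.inr (Or.inr (Or.inl ⟨hp, by linear_combination ha,
        by linear_combination hb⟩)))
    · exact Or.inl (Or.inr (Or.inr (Or.inl ⟨hp, by linear_combination ha,
        by linear_combination hb⟩)))
  · -- y = x + (-1, -d) : shape B
    have hpy : P n hn2 y.2 = P n hn2 x.2 - 1 := by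
      have hc := congrArg (P n hn2) (show y.2 = x.2 - d by linear_combination hb)
      rwa [map_sub, P_d n d hn2 hd] at hc
    rcases zmod2_cases (P n hn2 x.2) with hp | hp
    · refine Or.inr (Or.inr (Or.inl ⟨?_, by linear_combination -ha,
        by linear_combination -hb⟩))
      rw [hpy, hp]; decide
    · refine Or.inl (Or.inr (Or.inl ⟨?_, by linear_combination -ha,
        by linear_combination -hb⟩))
      rw [hpy, hp]; decide

lemma adj_exists (m n d : ℕ) (hn2 : 2 ∣ n) (hcop : Nat.Coprime d n) (hd : d % 2 = 1)
    (h1n : (1 : ZMod n) ≠ 0) (x y : ZMod m × ZMod n)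
    (hadj : (Gs m n d).Adj x y) :
    (F1 m n d hn2 hcop).Adj x y ∨ (F2 m n d hn2 hcop).Adj x y := by
  rw [Gs, cay, fromRel_adj] at hadj
  obtain ⟨-, hmem⟩ := hadj
  simp only [Set.mem_insert_iff, Set.mem_singleton_iff, Prod.ext_iff,
    Prod.fst_sub, Prod.snd_sub] at hmem
  rcases hmem with h | h
  · exact (adj_exists_aux m n d hn2 hcop hd h1n y x h).imp Adj.symm Adj.symm
  · exact adj_exists_aux m n d hn2 hcop hd h1n x y h

lemma not_both (m n d : ℕ) (hn2 : 2 ∣ n) (hcop : Nat.Coprime d n) (hd : d % 2 = 1)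
    (h1n : (1 : ZMod n) ≠ 0) (h2m : (2 : ZMod m) ≠ 0) (h2d : (d : ZMod n) + d ≠ 0)
    (x y : ZMod m × ZMod n) :
    ¬((F1 m n d hn2 hcop).Adj x y ∧ (F2 m n d hn2 hcop).Adj x y) := by
  rintro ⟨h1, h2⟩
  rw [F1_adj_iff m n d hn2 hcop hd h1n] at h1
  rw [F2_adj_iff m n d hn2 hcop hd h1n] at h2
  rcases h1 with ⟨hp, ha, hb⟩ | ⟨hp, ha, hb⟩ | ⟨hp, ha, hb⟩ | ⟨hp, ha, hb⟩ <;>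
    rcases h2 with ⟨hq, hc, he⟩ | ⟨hq, hc, he⟩ | ⟨hq, hc, he⟩ | ⟨hq, hc, he⟩ <;>
    first
      | (rw [hp] at hq; exact absurd hq (by decide))
      | (rw [hq] at hp; exact absurd hp (by decide))
      | exact h2m (by linear_combination ha - hc)
      | exact h2m (by linear_combination hc - ha)
      | exact h2m (by linear_combination ha + hc)
      | exact h2m (by linear_combination -ha - hc)
      | exact h2d (by linear_combination hb + he)
      | exact h2d (by linear_combination -hb - he)
      | exact h2d (by linear_combination hb - he)
      | exact h2d (by linear_combination he - hb)

lemma F1_nbr (m n d : ℕ) (hn2 : 2 ∣ n) (hcop : Nat.Coprime d n)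
    (h1n : (1 : ZMod n) ≠ 0) (h2n : (2 : ZMod n) ≠ 0) (v : ZMod m × ZMod n) :
    ((F1 m n d hn2 hcop).neighborSet v).ncard = 2 := by
  rw [F1, comap_nbr, ncard_preimage]
  exact Cg_nbr_ncard m n h1n h2n _

lemma F2_nbr (m n d : ℕ) (hn2 : 2 ∣ n) (hcop : Nat.Coprime d n)
    (h1n : (1 : ZMod n) ≠ 0) (h2n : (2 : ZMod n) ≠ 0) (v : ZMod m × ZMod n) :
    ((F2 m n d hn2 hcop).neighborSet v).ncard = 2 := by
  rw [F2, comap_nbr, ncard_preimage]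
  exact Cg_nbr_ncard m n h1n h2n _

lemma F1_supp (m n d : ℕ) [NeZero n] (hn2 : 2 ∣ n) (hcop : Nat.Coprime d n)
    (h1n : (1 : ZMod n) ≠ 0) (v : ZMod m × ZMod n) :
    (((F1 m n d hn2 hcop).connectedComponentMk v).supp).ncard = n := by
  rw [F1, comap_supp, ncard_preimage, Cg_supp m n h1n, ncard_row]

lemma F2_supp (m n d : ℕ) [NeZero n] (hn2 : 2 ∣ n) (hcop : Nat.Coprime d n)
    (h1n : (1 : ZMod n) ≠ 0) (v : ZMod m × ZMod n) :
    (((F2 m n d hn2 hcop).connectedComponentMk v).supp).ncard = n := by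
  rw [F2, comap_supp, ncard_preimage, Cg_supp m n h1n, ncard_row]

end CayAux

theorem stmt_0 (m n d : ℕ) (hm : 3 ≤ m) (hn : 4 ≤ n) (hne : Even n)
    (hd0 : 0 < d) (hdn : d < n) (hcop : Nat.Coprime d n) :
    CycleDecomp
      (cay m n ({((1 : ZMod m), (d : ZMod n)), (1, -(d : ZMod n)),
        (-1, (d : ZMod n)), (-1, -(d : ZMod n))} : Set (ZMod m × ZMod n)))
      (fun _ : Fin 2 => n) := by
  haveI : NeZero n := ⟨by omega⟩
  haveI : NeZero m := ⟨by omega⟩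
  have hn2 : 2 ∣ n := hne.two_dvd
  have hd : d % 2 = 1 := by
    rcases Nat.even_or_odd d with he | ho
    · exfalso
      have h2 : (2 : ℕ) ∣ Nat.gcd d n := Nat.dvd_gcd he.two_dvd hn2
      rw [hcop.gcd_eq_one] at h2
      omega
    · exact Nat.odd_iff.mp ho
  have h1n : (1 : ZMod n) ≠ 0 := by
    intro h
    have := (ZMod.natCast_eq_zero_iff 1 n).mp (by exact_mod_cast h)
    have := Nat.le_of_dvd one_pos this
    omega
  have h2n : (2 : ZMod n) ≠ 0 := by
    intro h
    have := (ZMod.natCast_eq_zero_iff 2 n).mp (by exact_mod_cast h)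
    have := Nat.le_of_dvd two_pos this
    omega
  have h1m : (1 : ZMod m) ≠ 0 := by
    intro h
    have := (ZMod.natCast_eq_zero_iff 1 m).mp (by exact_mod_cast h)
    have := Nat.le_of_dvd one_pos this
    omega
  have h2m : (2 : ZMod m) ≠ 0 := by
    intro h
    have := (ZMod.natCast_eq_zero_iff 2 m).mp (by exact_mod_cast h)
    have := Nat.le_of_dvd two_pos this
    omega
  have h2d : (d : ZMod n) + d ≠ 0 := by
    intro h
    have h' : ((2 * d : ℕ) : ZMod n) = 0 := by push_cast; linear_combination h
    have hdvd := (ZMod.natCast_eq_zero_iff (2 * d) n).mp h'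
    have hn2' : n ∣ 2 := Nat.Coprime.dvd_of_dvd_mul_right hcop.symm hdvd
    have := Nat.le_of_dvd two_pos hn2'
    omega
  show CycleDecomp (CayAux.Gs m n d) _
  refine ⟨![CayAux.F1 m n d hn2 hcop, CayAux.F2 m n d hn2 hcop], ?_, ?_⟩
  · intro i
    fin_cases i <;>
      simp only [Fin.isValue, Matrix.cons_val_zero, Matrix.cons_val_one, Matrix.head_cons]
    · exact ⟨CayAux.F1_le m n d hn2 hcop hd h1n h1m,
        fun v => CayAux.F1_nbr m n d hn2 hcop h1n h2n v,
        fun v => CayAux.F1_supp m n d hn2 hcop h1n v⟩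
    · exact ⟨CayAux.F2_le m n d hn2 hcop hd h1n h1m,
        fun v => CayAux.F2_nbr m n d hn2 hcop h1n h2n v,
        fun v => CayAux.F2_supp m n d hn2 hcop h1n v⟩
  · intro e he
    revert he
    refine Sym2.ind (fun x y => ?_) e
    intro he
    rw [SimpleGraph.mem_edgeSet] at he
    rcases CayAux.adj_exists m n d hn2 hcop hd h1n x y he with h | h
    · refine ⟨0, ?_, ?_⟩
      · simpa only [Fin.isValue, Matrix.cons_val_zero, SimpleGraph.mem_edgeSet] using h
      · intro j hj
        fin_cases j
        · rfl
        · exfalso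
          refine CayAux.not_both m n d hn2 hcop hd h1n h2m h2d x y ⟨h, ?_⟩
          exact hj
    · refine ⟨1, ?_, ?_⟩
      · simpa only [Fin.isValue, Matrix.cons_val_one, Matrix.head_cons, Matrix.cons_val_zero,
          SimpleGraph.mem_edgeSet] using h
      · intro j hj
        fin_cases j
        · exfalso
          refine CayAux.not_both m n d hn2 hcop hd h1n h2m h2d x y ⟨?_, h⟩
          exact hj
        · rfl
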